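/- For the spider walk on SP(N) as above, for integers i, j ≥ 1 with i + j ≤ n and distinct legs ℓ ≠ ℓ*, the probability that the walk is at v(2i, ℓ*) at time 2k+2n, given it is at v(2j, ℓ) at time 2k, equals 2·p_{ℓ*}·P(S(2n) = 2(i+j)). -/

import Mathlib

open MeasureTheory ProbabilityTheory ENNReal
open Set

/-- A vertex of the spider `SP(N)`: `none` is the origin, and `some (j, r)` is the vertex
at height `r+1` on leg `j`. -/
abbrev SpiderVertex (N : ℕ) := Option (Fin N × ℕ)

/-- One-step transition probabilities of the random walk on the spider `SP(N)`. -/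
noncomputable def spiderKernel {N : ℕ} (p : Fin N → ℝ) :
    SpiderVertex N → SpiderVertex N → ℝ≥0∞
  | none, none => 0
  | none, some (j, r) => if r = 0 then ENNReal.ofReal (p j) else 0
  | some (_, r), none => if r = 0 then 1/2 else 0
  | some (j, r), some (j', r') => if j' = j ∧ (r' + 1 = r ∨ r' = r + 1) then 1/2 else 0

namespace SpiderAux

variable {N : ℕ} {p : Fin N → ℝ}

/-- tsum over an Option type, ℝ≥0∞ version. -/
lemma tsum_opt {β : Type*} (f : Option β → ℝ≥0∞) :
    ∑' v, f v = f none + ∑' b, f (some b) := by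
  classical
  rw [ENNReal.tsum_eq_add_tsum_ite none]
  congr 1
  have h2 : ∑' (b : β), (fun x => @ite ℝ≥0∞ (x = none) (Classical.propDecidable _) 0 (f x)) (some b)
      = ∑' x, @ite ℝ≥0∞ (x = none) (Classical.propDecidable _) 0 (f x) := by
    refine (Option.some_injective β).tsum_eq
      (f := fun x => @ite ℝ≥0∞ (x = none) (Classical.propDecidable _) 0 (f x)) ?_
    intro x hx
    rcases x with _ | b
    · simp at hx
    · exact ⟨b, rfl⟩
  refine h2.symm.trans ?_
  exact tsum_congr fun b => by simp

/-- pinch lemma -/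
lemma pinch {ι : Type*} [Countable ι] {a b : ι → ℝ≥0∞} (hab : ∀ i, a i ≤ b i)
    (hba : ∑' i, b i ≤ ∑' i, a i) (hfin : ∑' i, b i ≠ ⊤) (i : ι) : a i = b i := by
  classical
  have hsum : ∑' i, a i = ∑' i, b i := le_antisymm (ENNReal.tsum_le_tsum hab) hba
  refine le_antisymm (hab i) ?_
  rw [ENNReal.tsum_eq_add_tsum_ite i, ENNReal.tsum_eq_add_tsum_ite (f := b) i] at hsum
  have hR : ∑' x, ite (x = i) 0 (a x) ≤ ∑' x, ite (x = i) 0 (b x) := by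
    refine ENNReal.tsum_le_tsum fun x => ?_
    by_cases hx : x = i <;> simp [hx, hab x]
  have hRb : ∑' x, ite (x = i) 0 (b x) ≠ ⊤ := by
    intro h
    apply hfin
    rw [ENNReal.tsum_eq_add_tsum_ite (f := b) i, h, add_top]
  have h3 : b i + ∑' x, ite (x = i) 0 (b x) ≤ a i + ∑' x, ite (x = i) 0 (b x) := by
    rw [← hsum]; exact add_le_add le_rfl hR
  exact (ENNReal.add_le_add_iff_right hRb).mp h3


lemma kernel_none (v : SpiderVertex N) :
    spiderKernel p none v = match v with
      | none => 0
      | some (j, r) => if r = 0 then ENNReal.ofReal (p j) else 0 := by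
  rcases v with _ | ⟨j, r⟩ <;> rfl

/-- row sums of the spider kernel equal 1 -/
lemma rowsum (hp0 : ∀ j, 0 ≤ p j) (hp : ∑ j, p j = 1) (u : SpiderVertex N) :
    ∑' v, spiderKernel p u v = 1 := by
  classical
  rcases u with _ | ⟨m, r⟩
  · rw [tsum_opt]
    have h0 : spiderKernel p none (none : SpiderVertex N) = 0 := rfl
    rw [h0, zero_add]
    have h1 : ∀ x : Fin N × ℕ, spiderKernel p none (some x)
        = if x.2 = 0 then ENNReal.ofReal (p x.1) else 0 := by rintro ⟨j, r⟩; rfl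
    calc ∑' x : Fin N × ℕ, spiderKernel p none (some x)
        = ∑' (j : Fin N), ∑' (r : ℕ), if r = 0 then ENNReal.ofReal (p j) else 0 := by
          rw [← ENNReal.tsum_prod]; exact tsum_congr fun x => h1 x
      _ = ∑' (j : Fin N), ENNReal.ofReal (p j) := by
          refine tsum_congr fun j => tsum_ite_eq 0 _
      _ = ∑ j, ENNReal.ofReal (p j) := tsum_fintype _
      _ = ENNReal.ofReal (∑ j, p j) := (ENNReal.ofReal_sum_of_nonneg fun i _ => hp0 i).symm
      _ = 1 := by rw [hp, ENNReal.ofReal_one]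
  · rcases Nat.eq_zero_or_eq_succ_pred r with hr | hr
    · subst hr
      rw [tsum_opt]
      have h0 : spiderKernel p (some (m, 0)) (none : SpiderVertex N) = 1/2 := rfl
      have h1 : ∀ x : Fin N × ℕ, spiderKernel p (some (m,0)) (some x)
          = if x = (m, 1) then (1/2 : ℝ≥0∞) else 0 := by
        rintro ⟨j, r⟩
        show (if j = m ∧ (r + 1 = 0 ∨ r = 0 + 1) then (1/2 : ℝ≥0∞) else 0) = _
        by_cases hj : j = m
        · by_cases hr1 : r = 1
          · subst hj hr1; simp
          · have hcond : ¬(r + 1 = 0 ∨ r = 0 + 1) := by omega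
            simp [hj, hr1, hcond, Prod.ext_iff]
        · simp [hj, Prod.ext_iff]
      rw [h0]
      rw [tsum_congr h1, tsum_ite_eq]
      exact ENNReal.add_halves 1
    · obtain ⟨r', rfl⟩ : ∃ r'', r = r'' + 1 := ⟨r - 1, by omega⟩
      rw [tsum_opt]
      have h0 : spiderKernel p (some (m, r' + 1)) (none : SpiderVertex N) = 0 := by
        show (if r' + 1 = 0 then (1/2 : ℝ≥0∞) else 0) = 0
        simp
      have h1 : ∀ x : Fin N × ℕ, spiderKernel p (some (m, r'+1)) (some x)
          = (if x = (m, r') then (1/2 : ℝ≥0∞) else 0)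
            + (if x = (m, r'+2) then (1/2 : ℝ≥0∞) else 0) := by
        rintro ⟨j, r₂⟩
        show (if j = m ∧ (r₂ + 1 = r' + 1 ∨ r₂ = r' + 1 + 1) then (1/2 : ℝ≥0∞) else 0) = _
        by_cases hj : j = m
        · subst hj
          by_cases ha : r₂ = r'
          · subst ha
            have : r₂ + 1 = r₂ + 1 ∨ r₂ = r₂ + 1 + 1 := Or.inl rfl
            simp [this, Prod.ext_iff]
          · by_cases hb : r₂ = r' + 2
            · subst hb
              have hc : r' + 2 + 1 = r' + 1 ∨ r' + 2 = r' + 1 + 1 := Or.inr (by omega)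
              simp [hc, Prod.ext_iff]
            · have hcond : ¬(r₂ + 1 = r' + 1 ∨ r₂ = r' + 1 + 1) := by omega
              simp [ha, hb, hcond, Prod.ext_iff]
        · simp [hj, Prod.ext_iff]
      rw [h0, zero_add, tsum_congr h1, ENNReal.tsum_add, tsum_ite_eq, tsum_ite_eq]
      exact ENNReal.add_halves 1


noncomputable def KpowE (p : Fin N → ℝ) : ℕ → SpiderVertex N → SpiderVertex N → ℝ≥0∞
  | 0, u, w => if w = u then 1 else 0
  | (s+1), u, w => ∑' v, spiderKernel p u v * KpowE p s v w

lemma KpowE_zero (u w : SpiderVertex N) : KpowE p 0 u w = if w = u then 1 else 0 := rfl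

lemma KpowE_succ (s : ℕ) (u w : SpiderVertex N) :
    KpowE p (s+1) u w = ∑' v, spiderKernel p u v * KpowE p s v w := rfl

lemma KpowE_rowsum (hp0 : ∀ j, 0 ≤ p j) (hp : ∑ j, p j = 1) :
    ∀ (s : ℕ) (u : SpiderVertex N), ∑' w, KpowE p s u w = 1 := by
  intro s
  induction s with
  | zero => intro u; exact tsum_ite_eq u 1
  | succ s ih =>
    intro u
    calc ∑' w, KpowE p (s+1) u w = ∑' (w) (v), spiderKernel p u v * KpowE p s v w := rfl
      _ = ∑' (v) (w), spiderKernel p u v * KpowE p s v w := ENNReal.tsum_comm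
      _ = ∑' v, spiderKernel p u v * ∑' w, KpowE p s v w := by
          exact tsum_congr fun v => ENNReal.tsum_mul_left
      _ = ∑' v, spiderKernel p u v := by
          refine tsum_congr fun v => ?_; rw [ih v, mul_one]
      _ = 1 := rowsum hp0 hp u

lemma KpowE_le_one (hp0 : ∀ j, 0 ≤ p j) (hp : ∑ j, p j = 1) (s : ℕ) (u w : SpiderVertex N) :
    KpowE p s u w ≤ 1 :=
  (ENNReal.le_tsum w).trans (KpowE_rowsum hp0 hp s u).le

lemma KpowE_ne_top (hp0 : ∀ j, 0 ≤ p j) (hp : ∑ j, p j = 1) (s : ℕ) (u w : SpiderVertex N) :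
    KpowE p s u w ≠ ⊤ :=
  fun h => by simpa [h] using KpowE_le_one hp0 hp s u w

lemma KpowE_chapman : ∀ (s : ℕ) (u w : SpiderVertex N),
    KpowE p (s+1) u w = ∑' v, KpowE p s u v * spiderKernel p v w := by
  intro s
  induction s with
  | zero =>
    intro u w
    rw [KpowE_succ]
    have l : ∀ v : SpiderVertex N, spiderKernel p u v * KpowE p 0 v w
        = if v = w then spiderKernel p u w else 0 := by
      intro v
      rw [KpowE_zero]
      by_cases h : v = w
      · subst h; simp
      · have : w ≠ v := fun hw => h hw.symm
        simp [h, this]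
    have r : ∀ v : SpiderVertex N, KpowE p 0 u v * spiderKernel p v w
        = if v = u then spiderKernel p u w else 0 := by
      intro v
      rw [KpowE_zero]
      by_cases h : v = u
      · subst h; simp
      · have : v ≠ u := h
        simp [h]
    rw [tsum_congr l, tsum_congr r, tsum_ite_eq, tsum_ite_eq]
  | succ s ih =>
    intro u w
    calc KpowE p (s+2) u w = ∑' v, spiderKernel p u v * KpowE p (s+1) v w := rfl
      _ = ∑' v, spiderKernel p u v * ∑' c, KpowE p s v c * spiderKernel p c w := by
          exact tsum_congr fun v => by rw [ih]
      _ = ∑' (v) (c), spiderKernel p u v * (KpowE p s v c * spiderKernel p c w) := by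
          exact tsum_congr fun v => ENNReal.tsum_mul_left.symm
      _ = ∑' (c) (v), (spiderKernel p u v * KpowE p s v c) * spiderKernel p c w := by
          rw [ENNReal.tsum_comm]
          exact tsum_congr fun c => tsum_congr fun v => by ring
      _ = ∑' c, (∑' v, spiderKernel p u v * KpowE p s v c) * spiderKernel p c w := by
          exact tsum_congr fun c => ENNReal.tsum_mul_right
      _ = ∑' c, KpowE p (s+1) u c * spiderKernel p c w := rfl

/-- expansion of a (s+1)-step transition to the origin -/
lemma kstep_none (s : ℕ) (u : SpiderVertex N) :
    KpowE p (s+1) u none = (1/2) * ∑ j : Fin N, KpowE p s u (some (j, 0)) := by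
  classical
  rw [KpowE_chapman, tsum_opt]
  have h0 : KpowE p s u none * spiderKernel p (none : SpiderVertex N) none = 0 := by
    show _ * (0 : ℝ≥0∞) = 0; rw [mul_zero]
  rw [h0, zero_add, ENNReal.tsum_prod']
  have hinner : ∀ j : Fin N, ∑' r : ℕ, KpowE p s u (some (j, r)) * spiderKernel p (some (j, r)) none
      = KpowE p s u (some (j, 0)) * (1/2) := by
    intro j
    have hr : ∀ r : ℕ, KpowE p s u (some (j, r)) * spiderKernel p (some (j, r)) none
        = if r = 0 then KpowE p s u (some (j, 0)) * (1/2) else 0 := by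
      intro r
      show KpowE p s u (some (j, r)) * (if r = 0 then (1/2 : ℝ≥0∞) else 0) = _
      by_cases h : r = 0
      · subst h; simp
      · simp [h]
    rw [tsum_congr hr, tsum_ite_eq]
  rw [tsum_congr hinner, tsum_fintype, Finset.mul_sum]
  exact Finset.sum_congr rfl fun j _ => by ring

/-- expansion of a (s+1)-step transition to height 1 on leg m -/
lemma kstep_zero (s : ℕ) (u : SpiderVertex N) (m : Fin N) :
    KpowE p (s+1) u (some (m, 0))
      = KpowE p s u none * ENNReal.ofReal (p m) + (1/2) * KpowE p s u (some (m, 1)) := by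
  classical
  rw [KpowE_chapman, tsum_opt]
  have h0 : spiderKernel p (none : SpiderVertex N) (some (m, 0)) = ENNReal.ofReal (p m) := by
    show (if 0 = 0 then ENNReal.ofReal (p m) else 0) = _; simp
  have h1 : ∀ x : Fin N × ℕ, KpowE p s u (some x) * spiderKernel p (some x) (some (m, 0))
      = if x = (m, 1) then KpowE p s u (some (m, 1)) * (1/2) else 0 := by
    rintro ⟨j, r⟩
    show KpowE p s u (some (j, r)) * (if m = j ∧ (0 + 1 = r ∨ 0 = r + 1) then (1/2 : ℝ≥0∞) else 0) = _
    by_cases h : j = m ∧ r = 1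
    · obtain ⟨rfl, rfl⟩ := h
      rw [if_pos ⟨rfl, Or.inl rfl⟩, if_pos rfl]
    · have hc1 : ¬(m = j ∧ (0 + 1 = r ∨ 0 = r + 1)) := by
        rintro ⟨rfl, h2⟩; exact h ⟨rfl, by omega⟩
      have hc2 : ((j, r) : Fin N × ℕ) ≠ (m, 1) := by
        intro he
        rw [Prod.ext_iff] at he
        exact h ⟨he.1, he.2⟩
      rw [if_neg hc1, if_neg hc2, mul_zero]
  rw [h0, tsum_congr h1, tsum_ite_eq]
  ring

/-- expansion of a (s+1)-step transition to height y+2 on leg m -/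
lemma kstep_succ (s : ℕ) (u : SpiderVertex N) (m : Fin N) (y : ℕ) :
    KpowE p (s+1) u (some (m, y+1))
      = (1/2) * KpowE p s u (some (m, y)) + (1/2) * KpowE p s u (some (m, y+2)) := by
  classical
  rw [KpowE_chapman, tsum_opt]
  have h0 : KpowE p s u none * spiderKernel p (none : SpiderVertex N) (some (m, y+1)) = 0 := by
    have : spiderKernel p (none : SpiderVertex N) (some (m, y+1)) = 0 := by
      show (if y + 1 = 0 then ENNReal.ofReal (p m) else 0) = 0; simp
    rw [this, mul_zero]
  have h1 : ∀ x : Fin N × ℕ, KpowE p s u (some x) * spiderKernel p (some x) (some (m, y+1))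
      = (if x = (m, y) then KpowE p s u (some (m, y)) * (1/2) else 0)
        + (if x = (m, y+2) then KpowE p s u (some (m, y+2)) * (1/2) else 0) := by
    rintro ⟨j, r⟩
    show KpowE p s u (some (j, r)) * (if m = j ∧ (y + 1 + 1 = r ∨ y + 1 = r + 1) then (1/2 : ℝ≥0∞) else 0) = _
    by_cases ha : j = m ∧ r = y
    · obtain ⟨rfl, rfl⟩ := ha
      have hne : ((j, r) : Fin N × ℕ) ≠ (j, r + 2) := by
        intro he; rw [Prod.ext_iff] at he; omega
      rw [if_pos ⟨rfl, Or.inr rfl⟩, if_pos rfl, if_neg hne, add_zero]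
    · by_cases hb : j = m ∧ r = y + 2
      · obtain ⟨rfl, rfl⟩ := hb
        have hne : ((j, y + 2) : Fin N × ℕ) ≠ (j, y) := by
          intro he; rw [Prod.ext_iff] at he; omega
        rw [if_pos ⟨rfl, Or.inl rfl⟩, if_pos rfl, if_neg hne, zero_add]
      · have hc1 : ¬(m = j ∧ (y + 1 + 1 = r ∨ y + 1 = r + 1)) := by
          rintro ⟨rfl, h2⟩
          rcases h2 with h2 | h2
          · exact hb ⟨rfl, by omega⟩
          · exact ha ⟨rfl, by omega⟩
        have hc2 : ((j, r) : Fin N × ℕ) ≠ (m, y) := by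
          intro he; rw [Prod.ext_iff] at he; exact ha ⟨he.1, he.2⟩
        have hc3 : ((j, r) : Fin N × ℕ) ≠ (m, y + 2) := by
          intro he; rw [Prod.ext_iff] at he; exact hb ⟨he.1, he.2⟩
        rw [if_neg hc1, if_neg hc2, if_neg hc3, mul_zero, add_zero]
  rw [h0, zero_add, tsum_congr h1, ENNReal.tsum_add, tsum_ite_eq, tsum_ite_eq]
  ring


/-- SRW on ℤ: probability of being at `z` after `m` steps, starting from `0`. -/
noncomputable def Qq : ℕ → ℤ → ℝ≥0∞
  | 0, z => if z = 0 then 1 else 0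
  | (m+1), z => (1/2) * Qq m (z - 1) + (1/2) * Qq m (z + 1)

lemma Qq_zero (z : ℤ) : Qq 0 z = if z = 0 then 1 else 0 := rfl

lemma Qq_succ (m : ℕ) (z : ℤ) : Qq (m+1) z = (1/2) * Qq m (z - 1) + (1/2) * Qq m (z + 1) := rfl

lemma Qq_le_one : ∀ (m : ℕ) (z : ℤ), Qq m z ≤ 1 := by
  intro m
  induction m with
  | zero => intro z; rw [Qq_zero]; split_ifs <;> simp
  | succ m ih =>
    intro z
    rw [Qq_succ]
    calc (1/2) * Qq m (z-1) + (1/2) * Qq m (z+1) ≤ (1/2) * 1 + (1/2) * 1 :=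
          add_le_add (mul_le_mul_right (ih _) _) (mul_le_mul_right (ih _) _)
      _ = 1 := by rw [mul_one]; exact ENNReal.add_halves 1

lemma Qq_ne_top (m : ℕ) (z : ℤ) : Qq m z ≠ ⊤ :=
  fun h => by simpa [h] using Qq_le_one m z

lemma Qq_neg : ∀ (m : ℕ) (z : ℤ), Qq m (-z) = Qq m z := by
  intro m
  induction m with
  | zero =>
    intro z; rw [Qq_zero, Qq_zero]
    by_cases h : z = 0
    · subst h; norm_num
    · rw [if_neg (by omega), if_neg h]
  | succ m ih =>
    intro z
    rw [Qq_succ, Qq_succ]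
    have e1 : -z - 1 = -(z+1) := by ring
    have e2 : -z + 1 = -(z-1) := by ring
    rw [e1, e2, ih, ih, add_comm]

lemma Qq_congr {m : ℕ} {z z' : ℤ} (h : z = z') : Qq m z = Qq m z' := by rw [h]

lemma half_mul_two : (1/2 : ℝ≥0∞) * 2 = 1 := by
  rw [one_div]
  exact ENNReal.inv_mul_cancel (by norm_num) (by norm_num)

lemma halftwomul (u : ℝ≥0∞) : (1/2 : ℝ≥0∞) * (2 * u) = u := by
  rw [← mul_assoc, half_mul_two, one_mul]

lemma half_add_half (u : ℝ≥0∞) : (1/2 : ℝ≥0∞) * u + (1/2) * u = u := by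
  rw [← add_mul]
  have h : (1/2 : ℝ≥0∞) + 1/2 = 1 := ENNReal.add_halves 1
  rw [h, one_mul]

lemma two_half_add (P A B : ℝ≥0∞) : 2 * P * ((1/2) * A + (1/2) * B) = P * A + P * B := by
  calc 2 * P * ((1/2) * A + (1/2) * B)
      = (1/2) * (2 * (P * A)) + (1/2) * (2 * (P * B)) := by ring
    _ = P * A + P * B := by rw [halftwomul, halftwomul]


lemma sumP (hp0 : ∀ j, 0 ≤ p j) (hp : ∑ j, p j = 1) :
    ∑ j, ENNReal.ofReal (p j) = 1 := by
  rw [← ENNReal.ofReal_sum_of_nonneg fun i _ => hp0 i, hp, ENNReal.ofReal_one]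

/-- The main reflection identities, proven jointly by induction. -/
lemma Gmain (hp0 : ∀ j, 0 ≤ p j) (hp : ∑ j, p j = 1) (ℓ : Fin N) (x : ℕ) : ∀ n : ℕ,
    (KpowE p n (some (ℓ, x)) none = Qq n (-((x:ℤ)+1)))
    ∧ (∀ m : Fin N, m ≠ ℓ → ∀ y : ℕ, KpowE p n (some (ℓ, x)) (some (m, y))
        = 2 * ENNReal.ofReal (p m) * Qq n (-((y:ℤ)+1) - ((x:ℤ)+1)))
    ∧ (∀ y : ℕ, KpowE p n (some (ℓ, x)) (some (ℓ, y)) + Qq n (-((y:ℤ)+1) - ((x:ℤ)+1))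
        = Qq n (((y:ℤ)+1) - ((x:ℤ)+1))
          + 2 * ENNReal.ofReal (p ℓ) * Qq n (-((y:ℤ)+1) - ((x:ℤ)+1))) := by
  intro n
  induction n with
  | zero =>
    refine ⟨?_, ?_, ?_⟩
    · rw [KpowE_zero, if_neg (by simp), Qq_zero, if_neg (by omega)]
    · intro m hm y
      rw [KpowE_zero, if_neg (by simp [hm]), Qq_zero, if_neg (by omega), mul_zero]
    · intro y
      simp only [KpowE_zero, Qq_zero]
      have hneg : ¬(-((y:ℤ)+1) - ((x:ℤ)+1) = 0) := by omega
      rw [if_neg hneg, mul_zero, add_zero, add_zero]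
      by_cases h : y = x
      · subst h
        rw [if_pos rfl, if_pos (show ((y:ℤ)+1) - ((y:ℤ)+1) = 0 by ring)]
      · rw [if_neg (by simp [h]), if_neg (by omega)]
  | succ n ih =>
    obtain ⟨ih1, ih2, ih3⟩ := ih
    set a : ℤ := (x:ℤ) + 1 with ha
    have ih3zero : KpowE p n (some (ℓ, x)) (some (ℓ, 0)) + Qq n (-1 - a)
        = Qq n (1 - a) + 2 * ENNReal.ofReal (p ℓ) * Qq n (-1 - a) := by
      have := ih3 0
      rwa [show (-(((0:ℕ):ℤ)+1) - a) = (-1 - a) by push_cast; ring,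
        show ((((0:ℕ):ℤ)+1) - a) = (1 - a) by push_cast; ring] at this
    refine ⟨?_, ?_, ?_⟩
    · -- transition to the origin
      rw [kstep_none]
      have hsplit : ∑ j : Fin N, KpowE p n (some (ℓ, x)) (some (j, 0))
          = KpowE p n (some (ℓ, x)) (some (ℓ, 0))
            + ∑ j ∈ Finset.univ.erase ℓ, KpowE p n (some (ℓ, x)) (some (j, 0)) :=
        (Finset.add_sum_erase _ _ (Finset.mem_univ ℓ)).symm
      have herase : ∑ j ∈ Finset.univ.erase ℓ, KpowE p n (some (ℓ, x)) (some (j, 0))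
          = ∑ j ∈ Finset.univ.erase ℓ, 2 * ENNReal.ofReal (p j) * Qq n (-1 - a) := by
        refine Finset.sum_congr rfl fun j hj => ?_
        have hjℓ : j ≠ ℓ := Finset.ne_of_mem_erase hj
        have := ih2 j hjℓ 0
        rwa [show (-(((0:ℕ):ℤ)+1) - a) = (-1 - a) by push_cast; ring] at this
      have hsum2 : ∑ j ∈ Finset.univ.erase ℓ, 2 * ENNReal.ofReal (p j) * Qq n (-1 - a)
            + 2 * ENNReal.ofReal (p ℓ) * Qq n (-1 - a)
          = 2 * Qq n (-1 - a) := by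
        calc ∑ j ∈ Finset.univ.erase ℓ, 2 * ENNReal.ofReal (p j) * Qq n (-1 - a)
              + 2 * ENNReal.ofReal (p ℓ) * Qq n (-1 - a)
            = ∑ j, 2 * ENNReal.ofReal (p j) * Qq n (-1 - a) :=
              Finset.sum_erase_add _ _ (Finset.mem_univ ℓ)
          _ = (2 * Qq n (-1 - a)) * ∑ j, ENNReal.ofReal (p j) := by
              rw [Finset.mul_sum]; exact Finset.sum_congr rfl fun j _ => by ring
          _ = 2 * Qq n (-1 - a) := by rw [sumP hp0 hp, mul_one]
      rw [Qq_succ, show (-a - 1 : ℤ) = -1 - a by ring, show (-a + 1 : ℤ) = 1 - a by ring]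
      have hfin : (1/2 : ℝ≥0∞) * Qq n (-1 - a) ≠ ⊤ :=
        ENNReal.mul_ne_top (by norm_num) (Qq_ne_top _ _)
      rw [← ENNReal.add_right_inj hfin]
      have hhh : (1/2 : ℝ≥0∞) * Qq n (-1 - a) + ((1/2) * Qq n (-1 - a) + (1/2) * Qq n (1 - a))
          = (1/2) * Qq n (1 - a) + Qq n (-1 - a) := by
        rw [← add_assoc, half_add_half]; ring
      calc (1/2) * Qq n (-1 - a) + (1/2) * ∑ j : Fin N, KpowE p n (some (ℓ, x)) (some (j, 0))
          = (1/2) * (KpowE p n (some (ℓ, x)) (some (ℓ, 0)) + Qq n (-1 - a))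
            + (1/2) * ∑ j ∈ Finset.univ.erase ℓ, KpowE p n (some (ℓ, x)) (some (j, 0)) := by
            rw [hsplit]; ring
        _ = (1/2) * (Qq n (1 - a) + 2 * ENNReal.ofReal (p ℓ) * Qq n (-1 - a))
            + (1/2) * ∑ j ∈ Finset.univ.erase ℓ, 2 * ENNReal.ofReal (p j) * Qq n (-1 - a) := by
            rw [ih3zero, herase]
        _ = (1/2) * Qq n (1 - a) + (1/2) *
            (∑ j ∈ Finset.univ.erase ℓ, 2 * ENNReal.ofReal (p j) * Qq n (-1 - a)
              + 2 * ENNReal.ofReal (p ℓ) * Qq n (-1 - a)) := by ring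
        _ = (1/2) * Qq n (1 - a) + (1/2) * (2 * Qq n (-1 - a)) := by rw [hsum2]
        _ = (1/2) * Qq n (1 - a) + Qq n (-1 - a) := by rw [halftwomul]
        _ = (1/2) * Qq n (-1 - a) + ((1/2) * Qq n (-1 - a) + (1/2) * Qq n (1 - a)) := hhh.symm
    · -- transition to a different leg m
      intro m hm y
      rcases y with _ | y'
      · -- y = 0
        rw [kstep_zero, ih1]
        have i2 := ih2 m hm 1
        rw [show (-(((1:ℕ):ℤ)+1) - a) = (-2 - a) by push_cast; ring] at i2
        rw [i2, Qq_succ,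
          show (-(((0:ℕ):ℤ)+1) - a - 1) = (-2 - a) by push_cast; ring,
          show (-(((0:ℕ):ℤ)+1) - a + 1) = (-a) by push_cast; ring,
          show (-((x:ℤ)+1)) = -a by rw [ha]]
        rw [two_half_add]
        have e : (1/2 : ℝ≥0∞) * (2 * ENNReal.ofReal (p m) * Qq n (-2 - a))
            = ENNReal.ofReal (p m) * Qq n (-2 - a) := by
          rw [mul_assoc 2, halftwomul]
        rw [e]
        ring
      · -- y = y' + 1
        rw [kstep_succ]
        have iA := ih2 m hm y'
        have iB := ih2 m hm (y' + 2)
        rw [show (-((((y'+2):ℕ):ℤ)+1) - a) = (-((y':ℤ)+1) - a - 2) by push_cast; ring] at iB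
        rw [iA, iB, Qq_succ,
          show (-((((y'+1):ℕ):ℤ)+1) - a - 1) = (-((y':ℤ)+1) - a - 2) by push_cast; ring,
          show (-((((y'+1):ℕ):ℤ)+1) - a + 1) = (-((y':ℤ)+1) - a) by push_cast; ring,
          show (-(((y':ℕ):ℤ)+1) - a) = (-((y':ℤ)+1) - a) by push_cast; ring]
        rw [two_half_add]
        have e1 : (1/2 : ℝ≥0∞) * (2 * ENNReal.ofReal (p m) * Qq n (-((y':ℤ)+1) - a))
            = ENNReal.ofReal (p m) * Qq n (-((y':ℤ)+1) - a) := by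
          rw [mul_assoc 2, halftwomul]
        have e2 : (1/2 : ℝ≥0∞) * (2 * ENNReal.ofReal (p m) * Qq n (-((y':ℤ)+1) - a - 2))
            = ENNReal.ofReal (p m) * Qq n (-((y':ℤ)+1) - a - 2) := by
          rw [mul_assoc 2, halftwomul]
        rw [e1, e2]
        ring
    · -- same leg ℓ
      intro y
      rcases y with _ | y'
      · -- y = 0
        rw [kstep_zero, ih1]
        have i3 := ih3 1
        rw [show (-(((1:ℕ):ℤ)+1) - a) = (-2 - a) by push_cast; ring,
          show ((((1:ℕ):ℤ)+1) - a) = (2 - a) by push_cast; ring] at i3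
        rw [Qq_succ, Qq_succ,
          show (-(((0:ℕ):ℤ)+1) - a - 1) = (-2 - a) by push_cast; ring,
          show (-(((0:ℕ):ℤ)+1) - a + 1) = (-a) by push_cast; ring,
          show ((((0:ℕ):ℤ)+1) - a - 1) = (-a) by push_cast; ring,
          show ((((0:ℕ):ℤ)+1) - a + 1) = (2 - a) by push_cast; ring,
          show (-((x:ℤ)+1)) = -a by rw [ha]]
        rw [two_half_add]
        calc Qq n (-a) * ENNReal.ofReal (p ℓ) + (1/2) * KpowE p n (some (ℓ, x)) (some (ℓ, 1))
              + ((1/2) * Qq n (-2 - a) + (1/2) * Qq n (-a))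
            = (1/2) * (KpowE p n (some (ℓ, x)) (some (ℓ, 1)) + Qq n (-2 - a))
              + (Qq n (-a) * ENNReal.ofReal (p ℓ) + (1/2) * Qq n (-a)) := by ring
          _ = (1/2) * (Qq n (2 - a) + 2 * ENNReal.ofReal (p ℓ) * Qq n (-2 - a))
              + (Qq n (-a) * ENNReal.ofReal (p ℓ) + (1/2) * Qq n (-a)) := by rw [i3]
          _ = (1/2) * Qq n (2 - a) + (1/2) * (2 * (ENNReal.ofReal (p ℓ) * Qq n (-2 - a)))
              + (Qq n (-a) * ENNReal.ofReal (p ℓ) + (1/2) * Qq n (-a)) := by ring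
          _ = (1/2) * Qq n (2 - a) + ENNReal.ofReal (p ℓ) * Qq n (-2 - a)
              + (Qq n (-a) * ENNReal.ofReal (p ℓ) + (1/2) * Qq n (-a)) := by rw [halftwomul]
          _ = ((1/2) * Qq n (-a) + (1/2) * Qq n (2 - a))
              + (ENNReal.ofReal (p ℓ) * Qq n (-2 - a) + ENNReal.ofReal (p ℓ) * Qq n (-a)) := by
              ring
      · -- y = y' + 1
        rw [kstep_succ]
        have iA := ih3 y'
        have iB := ih3 (y' + 2)
        rw [show (-((((y'+2):ℕ):ℤ)+1) - a) = (-((y':ℤ)+1) - a - 2) by push_cast; ring,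
          show (((((y'+2):ℕ):ℤ)+1) - a) = (((y':ℤ)+1) - a + 2) by push_cast; ring] at iB
        rw [show (-(((y':ℕ):ℤ)+1) - a) = (-((y':ℤ)+1) - a) by push_cast; ring,
          show ((((y':ℕ):ℤ)+1) - a) = (((y':ℤ)+1) - a) by push_cast; ring] at iA
        rw [Qq_succ, Qq_succ,
          show (-((((y'+1):ℕ):ℤ)+1) - a - 1) = (-((y':ℤ)+1) - a - 2) by push_cast; ring,
          show (-((((y'+1):ℕ):ℤ)+1) - a + 1) = (-((y':ℤ)+1) - a) by push_cast; ring,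
          show (((((y'+1):ℕ):ℤ)+1) - a - 1) = (((y':ℤ)+1) - a) by push_cast; ring,
          show (((((y'+1):ℕ):ℤ)+1) - a + 1) = (((y':ℤ)+1) - a + 2) by push_cast; ring]
        rw [two_half_add]
        calc (1/2) * KpowE p n (some (ℓ, x)) (some (ℓ, y'))
              + (1/2) * KpowE p n (some (ℓ, x)) (some (ℓ, y' + 2))
              + ((1/2) * Qq n (-((y':ℤ)+1) - a - 2) + (1/2) * Qq n (-((y':ℤ)+1) - a))
            = (1/2) * (KpowE p n (some (ℓ, x)) (some (ℓ, y')) + Qq n (-((y':ℤ)+1) - a))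
              + (1/2) * (KpowE p n (some (ℓ, x)) (some (ℓ, y' + 2))
                  + Qq n (-((y':ℤ)+1) - a - 2)) := by ring
          _ = (1/2) * (Qq n (((y':ℤ)+1) - a) + 2 * ENNReal.ofReal (p ℓ) * Qq n (-((y':ℤ)+1) - a))
              + (1/2) * (Qq n (((y':ℤ)+1) - a + 2)
                  + 2 * ENNReal.ofReal (p ℓ) * Qq n (-((y':ℤ)+1) - a - 2)) := by rw [iA, iB]
          _ = (1/2) * Qq n (((y':ℤ)+1) - a)
              + (1/2) * (2 * (ENNReal.ofReal (p ℓ) * Qq n (-((y':ℤ)+1) - a)))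
              + ((1/2) * Qq n (((y':ℤ)+1) - a + 2)
                  + (1/2) * (2 * (ENNReal.ofReal (p ℓ) * Qq n (-((y':ℤ)+1) - a - 2)))) := by ring
          _ = (1/2) * Qq n (((y':ℤ)+1) - a)
              + ENNReal.ofReal (p ℓ) * Qq n (-((y':ℤ)+1) - a)
              + ((1/2) * Qq n (((y':ℤ)+1) - a + 2)
                  + ENNReal.ofReal (p ℓ) * Qq n (-((y':ℤ)+1) - a - 2)) := by
              rw [halftwomul, halftwomul]
          _ = ((1/2) * Qq n (((y':ℤ)+1) - a) + (1/2) * Qq n (((y':ℤ)+1) - a + 2))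
              + (ENNReal.ofReal (p ℓ) * Qq n (-((y':ℤ)+1) - a - 2)
                  + ENNReal.ofReal (p ℓ) * Qq n (-((y':ℤ)+1) - a)) := by ring


variable {Ω : Type*} [MeasurableSpace Ω]

/-- the cylinder event -/
def Cyl (Y : ℕ → Ω → SpiderVertex N) (h : ℕ → SpiderVertex N) (n : ℕ) : Set Ω :=
  {ω | ∀ i ≤ n, Y i ω = h i}

/-- single-time event -/
def Ev (Y : ℕ → Ω → SpiderVertex N) (m : ℕ) (v : SpiderVertex N) : Set Ω :=
  {ω | Y m ω = v}

/-- extension of a finite history by a value -/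
def extend {m : ℕ} (g : Fin m → SpiderVertex N) (v : SpiderVertex N) : ℕ → SpiderVertex N :=
  fun t => if ht : t < m then g ⟨t, ht⟩ else v

lemma extend_last {m : ℕ} (g : Fin m → SpiderVertex N) (v : SpiderVertex N) :
    extend g v m = v := dif_neg (lt_irrefl m)

lemma extend_lt {m : ℕ} (g : Fin m → SpiderVertex N) (v : SpiderVertex N) {t : ℕ} (ht : t < m) :
    extend g v t = g ⟨t, ht⟩ := dif_pos ht

/-- splitting a tsum at one point -/
lemma tsum_split_at {ι : Type*} [DecidableEq ι] (b : ι → ℝ≥0∞) (v₀ : ι) :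
    ∑' w, b w = b v₀ + ∑' w, (if w = v₀ then 0 else b w) := by
  rw [ENNReal.tsum_eq_add_tsum_ite v₀]
  congr 1
  exact tsum_congr fun w => by by_cases h : w = v₀ <;> simp [h]

lemma cyl_succ (Y : ℕ → Ω → SpiderVertex N) (h : ℕ → SpiderVertex N) (n : ℕ) :
    Cyl Y h (n+1) = Cyl Y h n ∩ Ev Y (n+1) (h (n+1)) := by
  ext ω
  constructor
  · intro H
    exact ⟨fun i hi => H i (hi.trans (Nat.le_succ n)), H (n+1) le_rfl⟩
  · rintro ⟨H1, H2⟩ i hi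
    rcases Nat.eq_or_lt_of_le hi with he | hl
    · rw [he]; exact H2
    · exact H1 i (by omega)

lemma cyl_congr (Y : ℕ → Ω → SpiderVertex N) {h h' : ℕ → SpiderVertex N} {n : ℕ}
    (hhh : ∀ i ≤ n, h i = h' i) : Cyl Y h n = Cyl Y h' n := by
  ext ω
  exact ⟨fun H i hi => (H i hi).trans (hhh i hi), fun H i hi => (H i hi).trans (hhh i hi).symm⟩

lemma ev_eq_iUnion (Y : ℕ → Ω → SpiderVertex N) (m : ℕ) (v : SpiderVertex N) :
    Ev Y m v = ⋃ g : Fin m → SpiderVertex N, Cyl Y (extend g v) m := by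
  ext ω
  constructor
  · intro hω
    refine mem_iUnion.2 ⟨fun i => Y i.1 ω, fun i hi => ?_⟩
    unfold extend
    rcases Nat.eq_or_lt_of_le hi with he | hl
    · subst he; rw [dif_neg (lt_irrefl i)]; exact hω
    · rw [dif_pos hl]
  · intro hω
    obtain ⟨g, hg⟩ := mem_iUnion.1 hω
    have := hg m le_rfl
    rwa [extend_last] at this

section Meas

variable (μ : Measure Ω) [IsProbabilityMeasure μ] (Y : ℕ → Ω → SpiderVertex N)

/-- one-step conditional from the Markov hypothesis, as an unconditional product formula -/
lemma step (hp0 : ∀ j, 0 ≤ p j) (hp : ∑ j, p j = 1)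
    (hMarkov : ∀ (n : ℕ) (h : ℕ → SpiderVertex N) (v : SpiderVertex N),
      μ {ω | ∀ i ≤ n, Y i ω = h i} ≠ 0 →
      (μ[|{ω | ∀ i ≤ n, Y i ω = h i}]) {ω | Y (n+1) ω = v} = spiderKernel p (h n) v)
    (h : ℕ → SpiderVertex N) (n : ℕ) (v : SpiderVertex N) :
    μ (Cyl Y h n ∩ Ev Y (n+1) v) = μ (Cyl Y h n) * spiderKernel p (h n) v := by
  by_cases hA : μ (Cyl Y h n) = 0
  · rw [hA, zero_mul]
    exact measure_mono_null inter_subset_left hA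
  · have hres : ∀ w, μ.restrict (Cyl Y h n) (Ev Y (n+1) w)
        = μ (Cyl Y h n) * spiderKernel p (h n) w := by
      intro w
      have hM : (μ[|Cyl Y h n]) (Ev Y (n+1) w) = spiderKernel p (h n) w := hMarkov n h w hA
      rw [ProbabilityTheory.cond, Measure.smul_apply, smul_eq_mul] at hM
      have h2 := congrArg (fun z => μ (Cyl Y h n) * z) hM
      simp only [← mul_assoc, ENNReal.mul_inv_cancel hA (measure_ne_top μ _), one_mul] at h2
      exact h2
    have hab : ∀ w, μ (Cyl Y h n ∩ Ev Y (n+1) w)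
        ≤ μ (Cyl Y h n) * spiderKernel p (h n) w := by
      intro w
      rw [← hres w, inter_comm]
      exact Measure.le_restrict_apply _ _
    have hcover : μ (Cyl Y h n) ≤ ∑' w, μ (Cyl Y h n ∩ Ev Y (n+1) w) := by
      have hsub : Cyl Y h n ⊆ ⋃ w, (Cyl Y h n ∩ Ev Y (n+1) w) := by
        intro ω hω
        exact mem_iUnion.2 ⟨Y (n+1) ω, hω, rfl⟩
      exact (measure_mono hsub).trans (measure_iUnion_le _)
    have hsumb : ∑' w, μ (Cyl Y h n) * spiderKernel p (h n) w = μ (Cyl Y h n) := by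
      rw [ENNReal.tsum_mul_left, rowsum hp0 hp, mul_one]
    exact pinch hab (by rw [hsumb]; exact hcover) (by rw [hsumb]; exact measure_ne_top μ _) v

/-- bound on the measure of the complement of a cylinder -/
lemma cyl_compl_bound (hp0 : ∀ j, 0 ≤ p j) (hp : ∑ j, p j = 1)
    (hY0 : ∀ ω, Y 0 ω = none)
    (hMarkov : ∀ (n : ℕ) (h : ℕ → SpiderVertex N) (v : SpiderVertex N),
      μ {ω | ∀ i ≤ n, Y i ω = h i} ≠ 0 →
      (μ[|{ω | ∀ i ≤ n, Y i ω = h i}]) {ω | Y (n+1) ω = v} = spiderKernel p (h n) v) :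
    ∀ (n : ℕ) (h : ℕ → SpiderVertex N), μ (Cyl Y h n) + μ ((Cyl Y h n)ᶜ) ≤ 1 := by
  intro n
  induction n with
  | zero =>
    intro h
    by_cases h0 : h 0 = none
    · have : Cyl Y h 0 = univ := by
        ext ω
        simp only [Cyl, mem_setOf_eq, mem_univ, iff_true]
        intro i hi
        rw [Nat.le_zero.1 hi, hY0 ω, h0]
      rw [this, compl_univ, measure_univ, measure_empty, add_zero]
    · have : Cyl Y h 0 = ∅ := by
        ext ω
        simp only [Cyl, mem_setOf_eq, mem_empty_iff_false, iff_false]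
        intro H
        exact h0 (((hY0 ω).symm.trans (H 0 le_rfl)).symm)
      rw [this, compl_empty, measure_univ, measure_empty, zero_add]
  | succ n ih =>
    intro h
    classical
    set A := Cyl Y h n with hA
    set v₀ := h (n+1) with hv₀
    have hA' : Cyl Y h (n+1) = A ∩ Ev Y (n+1) v₀ := cyl_succ Y h n
    have hcompl : (A ∩ Ev Y (n+1) v₀)ᶜ ⊆ Aᶜ ∪ (A ∩ (Ev Y (n+1) v₀)ᶜ) := by
      intro ω hω
      by_cases hωA : ω ∈ A
      · right
        exact ⟨hωA, fun hev => hω ⟨hωA, hev⟩⟩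
      · left; exact hωA
    have hBc : μ (A ∩ (Ev Y (n+1) v₀)ᶜ)
        ≤ ∑' w, (if w = v₀ then 0 else μ (A ∩ Ev Y (n+1) w)) := by
      have hsub : A ∩ (Ev Y (n+1) v₀)ᶜ
          ⊆ ⋃ w, (if w = v₀ then (∅ : Set Ω) else A ∩ Ev Y (n+1) w) := by
        rintro ω ⟨hωA, hωB⟩
        refine mem_iUnion.2 ⟨Y (n+1) ω, ?_⟩
        rw [if_neg (by exact fun he => hωB he)]
        exact ⟨hωA, rfl⟩
      refine (measure_mono hsub).trans ((measure_iUnion_le _).trans ?_)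
      refine ENNReal.tsum_le_tsum fun w => ?_
      by_cases hw : w = v₀ <;> simp [hw]
    have hstep : ∀ w, μ (A ∩ Ev Y (n+1) w) = μ A * spiderKernel p (h n) w :=
      fun w => step μ Y hp0 hp hMarkov h n w
    have hkey : μ (A ∩ Ev Y (n+1) v₀) + μ (A ∩ (Ev Y (n+1) v₀)ᶜ) ≤ μ A := by
      calc μ (A ∩ Ev Y (n+1) v₀) + μ (A ∩ (Ev Y (n+1) v₀)ᶜ)
          ≤ μ A * spiderKernel p (h n) v₀
            + ∑' w, (if w = v₀ then 0 else μ (A ∩ Ev Y (n+1) w)) := by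
            rw [hstep v₀]; exact add_le_add le_rfl hBc
        _ = μ A * spiderKernel p (h n) v₀
            + ∑' w, (if w = v₀ then 0 else μ A * spiderKernel p (h n) w) := by
            congr 1
            exact tsum_congr fun w => by by_cases hw : w = v₀ <;> simp [hw, hstep]
        _ = ∑' w, μ A * spiderKernel p (h n) w :=
            (tsum_split_at (fun w => μ A * spiderKernel p (h n) w) v₀).symm
        _ = μ A := by rw [ENNReal.tsum_mul_left, rowsum hp0 hp, mul_one]
    calc μ (Cyl Y h (n+1)) + μ ((Cyl Y h (n+1))ᶜ)
        ≤ μ (A ∩ Ev Y (n+1) v₀) + (μ Aᶜ + μ (A ∩ (Ev Y (n+1) v₀)ᶜ)) := by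
          rw [hA']
          exact add_le_add le_rfl ((measure_mono hcompl).trans (measure_union_le _ _))
      _ = (μ (A ∩ Ev Y (n+1) v₀) + μ (A ∩ (Ev Y (n+1) v₀)ᶜ)) + μ Aᶜ := by ring
      _ ≤ μ A + μ Aᶜ := add_le_add hkey le_rfl
      _ ≤ 1 := ih h

/-- a set whose measure plus that of its complement is at most one is null-measurable -/
lemma nullMeas_of_add {B : Set Ω} (hB : μ B + μ Bᶜ ≤ 1) : NullMeasurableSet B μ := by
  obtain ⟨b, hBb, hbm, hb⟩ := exists_measurable_superset μ B
  obtain ⟨c, hBc, hcm, hc⟩ := exists_measurable_superset μ Bᶜ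
  have hbc : b ∪ c = univ := by
    apply eq_univ_of_univ_subset
    rw [← union_compl_self B]
    exact union_subset_union hBb hBc
  have hinter : μ (b ∩ c) = 0 := by
    have h1 : μ (b ∪ c) + μ (b ∩ c) = μ b + μ c := measure_union_add_inter b hcm
    rw [hbc, measure_univ, hb, hc] at h1
    by_contra hne
    have : (1 : ℝ≥0∞) < 1 + μ (b ∩ c) :=
      ENNReal.lt_add_right one_ne_top hne
    rw [h1] at this
    exact absurd (this.trans_le hB) (lt_irrefl 1)
  have hsub1 : cᶜ ⊆ B := by
    intro x hx
    by_contra hxB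
    exact hx (hBc hxB)
  refine (hcm.compl.nullMeasurableSet).congr ?_
  rw [Filter.eventuallyEq_set]
  apply Filter.Eventually.mono (measure_eq_zero_iff_ae_notMem.1 hinter)
  intro x hx
  constructor
  · intro hxc
    exact hsub1 hxc
  · intro hxB hxc
    exact hx ⟨hBb hxB, hxc⟩

lemma cyl_nullMeas (hp0 : ∀ j, 0 ≤ p j) (hp : ∑ j, p j = 1)
    (hY0 : ∀ ω, Y 0 ω = none)
    (hMarkov : ∀ (n : ℕ) (h : ℕ → SpiderVertex N) (v : SpiderVertex N),
      μ {ω | ∀ i ≤ n, Y i ω = h i} ≠ 0 →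
      (μ[|{ω | ∀ i ≤ n, Y i ω = h i}]) {ω | Y (n+1) ω = v} = spiderKernel p (h n) v)
    (h : ℕ → SpiderVertex N) (n : ℕ) : NullMeasurableSet (Cyl Y h n) μ :=
  nullMeas_of_add μ (cyl_compl_bound μ Y hp0 hp hY0 hMarkov n h)

lemma ev_nullMeas (hp0 : ∀ j, 0 ≤ p j) (hp : ∑ j, p j = 1)
    (hY0 : ∀ ω, Y 0 ω = none)
    (hMarkov : ∀ (n : ℕ) (h : ℕ → SpiderVertex N) (v : SpiderVertex N),
      μ {ω | ∀ i ≤ n, Y i ω = h i} ≠ 0 →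
      (μ[|{ω | ∀ i ≤ n, Y i ω = h i}]) {ω | Y (n+1) ω = v} = spiderKernel p (h n) v)
    (m : ℕ) (v : SpiderVertex N) : NullMeasurableSet (Ev Y m v) μ := by
  rw [ev_eq_iUnion Y m v]
  exact NullMeasurableSet.iUnion fun g => cyl_nullMeas μ Y hp0 hp hY0 hMarkov _ m

/-- multi-step transition from a cylinder -/
lemma multi (hp0 : ∀ j, 0 ≤ p j) (hp : ∑ j, p j = 1)
    (hY0 : ∀ ω, Y 0 ω = none)
    (hMarkov : ∀ (n : ℕ) (h : ℕ → SpiderVertex N) (v : SpiderVertex N),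
      μ {ω | ∀ i ≤ n, Y i ω = h i} ≠ 0 →
      (μ[|{ω | ∀ i ≤ n, Y i ω = h i}]) {ω | Y (n+1) ω = v} = spiderKernel p (h n) v) :
    ∀ (s : ℕ) (h : ℕ → SpiderVertex N) (n : ℕ) (w : SpiderVertex N),
      μ (Cyl Y h n ∩ Ev Y (n+s) w) = μ (Cyl Y h n) * KpowE p s (h n) w := by
  intro s
  induction s with
  | zero =>
    intro h n w
    rw [Nat.add_zero]
    show μ (Cyl Y h n ∩ Ev Y n w) = μ (Cyl Y h n) * (if w = h n then 1 else 0)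
    by_cases hw : w = h n
    · have : Cyl Y h n ∩ Ev Y n w = Cyl Y h n := by
        apply inter_eq_self_of_subset_left
        intro ω hω
        show Y n ω = w
        rw [hω n le_rfl, hw]
      rw [this, if_pos hw, mul_one]
    · have : Cyl Y h n ∩ Ev Y n w = ∅ := by
        ext ω
        simp only [mem_inter_iff, mem_empty_iff_false, iff_false]
        rintro ⟨h1, h2⟩
        exact hw ((h2 : Y n ω = w).symm.trans (h1 n le_rfl))
      rw [this, if_neg hw, mul_zero, measure_empty]
  | succ s ih =>
    intro h n w
    classical
    have hU : Cyl Y h n ∩ Ev Y (n+(s+1)) w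
        = ⋃ v, (Cyl Y (Function.update h (n+1) v) (n+1) ∩ Ev Y (n+(s+1)) w) := by
      ext ω
      constructor
      · rintro ⟨hc, he⟩
        refine mem_iUnion.2 ⟨Y (n+1) ω, ⟨?_, he⟩⟩
        intro i hi
        rcases Nat.eq_or_lt_of_le hi with hie | hil
        · rw [hie, Function.update_self]
        · rw [Function.update_of_ne (show i ≠ n+1 by omega)]
          exact hc i (by omega)
      · intro hω
        obtain ⟨v, hv, he⟩ := mem_iUnion.1 hω
        refine ⟨fun i hi => ?_, he⟩
        have := hv i (hi.trans (Nat.le_succ n))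
        rwa [Function.update_of_ne (show i ≠ n+1 by omega)] at this
    have hdisj : Pairwise (Function.onFun (AEDisjoint μ) fun v =>
        Cyl Y (Function.update h (n+1) v) (n+1) ∩ Ev Y (n+(s+1)) w) := by
      intro v v' hvv'
      apply Disjoint.aedisjoint
      rw [Set.disjoint_left]
      rintro ω ⟨hc, _⟩ ⟨hc', _⟩
      have h1 := hc (n+1) le_rfl
      have h2 := hc' (n+1) le_rfl
      rw [Function.update_self] at h1 h2
      exact hvv' (h1.symm.trans h2)
    have hnm : ∀ v, NullMeasurableSet
        (Cyl Y (Function.update h (n+1) v) (n+1) ∩ Ev Y (n+(s+1)) w) μ := fun v =>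
      (cyl_nullMeas μ Y hp0 hp hY0 hMarkov _ _).inter (ev_nullMeas μ Y hp0 hp hY0 hMarkov _ _)
    rw [hU, measure_iUnion₀ hdisj hnm]
    have hterm : ∀ v, μ (Cyl Y (Function.update h (n+1) v) (n+1) ∩ Ev Y (n+(s+1)) w)
        = μ (Cyl Y h n) * (spiderKernel p (h n) v * KpowE p s v w) := by
      intro v
      have he : n + (s+1) = (n+1) + s := by omega
      rw [he]
      have := ih (Function.update h (n+1) v) (n+1) w
      rw [Function.update_self] at this
      rw [this]
      have hcylval : μ (Cyl Y (Function.update h (n+1) v) (n+1))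
          = μ (Cyl Y h n) * spiderKernel p (h n) v := by
        rw [cyl_succ, Function.update_self]
        have hcc : Cyl Y (Function.update h (n+1) v) n = Cyl Y h n :=
          cyl_congr Y fun i hi => Function.update_of_ne (show i ≠ n+1 by omega) v h
        rw [hcc]
        exact step μ Y hp0 hp hMarkov h n v
      rw [hcylval, mul_assoc]
    rw [tsum_congr hterm, ENNReal.tsum_mul_left]
    rfl

/-- the conditional multi-step transition probability -/
lemma cond_eq (hp0 : ∀ j, 0 ≤ p j) (hp : ∑ j, p j = 1)
    (hY0 : ∀ ω, Y 0 ω = none)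
    (hMarkov : ∀ (n : ℕ) (h : ℕ → SpiderVertex N) (v : SpiderVertex N),
      μ {ω | ∀ i ≤ n, Y i ω = h i} ≠ 0 →
      (μ[|{ω | ∀ i ≤ n, Y i ω = h i}]) {ω | Y (n+1) ω = v} = spiderKernel p (h n) v)
    (m s : ℕ) (v w : SpiderVertex N) (hB : μ (Ev Y m v) ≠ 0) :
    (μ[|Ev Y m v]) (Ev Y (m+s) w) = KpowE p s v w := by
  classical
  set F : (Fin m → SpiderVertex N) → Set Ω := fun g => Cyl Y (extend g v) m with hF
  have hEv : Ev Y m v = ⋃ g, F g := ev_eq_iUnion Y m v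
  have hdisj : Pairwise (Function.onFun (AEDisjoint μ) F) := by
    intro g g' hgg'
    apply Disjoint.aedisjoint
    rw [Set.disjoint_left]
    intro ω hω hω'
    apply hgg'
    funext t
    have h1 := hω t.1 (le_of_lt t.2)
    have h2 := hω' t.1 (le_of_lt t.2)
    rw [extend_lt g v t.2] at h1
    rw [extend_lt g' v t.2] at h2
    have : g ⟨t.1, t.2⟩ = g' ⟨t.1, t.2⟩ := h1.symm.trans h2
    simpa using this
  have hnm : ∀ g, NullMeasurableSet (F g) μ :=
    fun g => cyl_nullMeas μ Y hp0 hp hY0 hMarkov _ m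
  have hmes : μ (Ev Y m v) = ∑' g, μ (F g) := by
    rw [hEv]; exact measure_iUnion₀ hdisj hnm
  have hterm : ∀ g, μ (F g ∩ Ev Y (m+s) w) = μ (F g) * KpowE p s v w := by
    intro g
    have := multi μ Y hp0 hp hY0 hMarkov s (extend g v) m w
    rwa [extend_last] at this
  have hmes2 : μ (Ev Y (m+s) w ∩ Ev Y m v) = μ (Ev Y m v) * KpowE p s v w := by
    rw [inter_comm, hEv, Set.iUnion_inter]
    rw [measure_iUnion₀ (fun g g' hgg' => (hdisj hgg').mono inter_subset_left inter_subset_left)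
      (fun g => (hnm g).inter (ev_nullMeas μ Y hp0 hp hY0 hMarkov _ _))]
    rw [tsum_congr hterm, ENNReal.tsum_mul_right, ← hmes, ← hEv]
  rw [ProbabilityTheory.cond, Measure.smul_apply, smul_eq_mul,
    Measure.restrict_apply₀' (ev_nullMeas μ Y hp0 hp hY0 hMarkov m v), hmes2, ← mul_assoc,
    ENNReal.inv_mul_cancel hB (measure_ne_top μ _), one_mul]



end Meas



section Walk

variable {Ω' : Type*} [MeasurableSpace Ω'] (μ' : Measure Ω') [IsProbabilityMeasure μ']
variable (X : ℕ → Ω' → ℤ)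

lemma walk (hmeas : ∀ i, Measurable (X i))
    (hindep : iIndepFun X μ')
    (h1 : ∀ i, μ' {ω | X i ω = 1} = 1/2) (h2 : ∀ i, μ' {ω | X i ω = -1} = 1/2) :
    ∀ (m : ℕ) (z : ℤ), μ' {ω | (∑ i ∈ Finset.range m, X i ω) = z} = Qq m z := by
  intro m
  induction m with
  | zero =>
    intro z
    rw [Qq_zero]
    by_cases hz : z = 0
    · subst hz
      have : {ω : Ω' | (∑ i ∈ Finset.range 0, X i ω) = 0} = univ := by
        ext ω; simp
      rw [this, if_pos rfl, measure_univ]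
    · have : {ω : Ω' | (∑ i ∈ Finset.range 0, X i ω) = z} = ∅ := by
        ext ω; simp [Finset.sum_range_zero]; omega
      rw [this, if_neg hz, measure_empty]
  | succ m ih =>
    intro z
    have hT : Measurable fun ω => ∑ i ∈ Finset.range m, X i ω :=
      Finset.measurable_sum _ fun i _ => hmeas i
    have hTm : Measurable fun ω => ∑ i ∈ Finset.range (m+1), X i ω :=
      Finset.measurable_sum _ fun i _ => hmeas i
    have hXm := hmeas m
    set E := {ω : Ω' | (∑ i ∈ Finset.range (m+1), X i ω) = z} with hE
    have hEmeas : MeasurableSet E := hTm (measurableSet_singleton z)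
    have hU1 : MeasurableSet {ω : Ω' | X m ω = 1} := hXm (measurableSet_singleton 1)
    have hU2 : MeasurableSet {ω : Ω' | X m ω = -1} := hXm (measurableSet_singleton (-1))
    have hd12 : Disjoint {ω : Ω' | X m ω = 1} {ω : Ω' | X m ω = -1} := by
      rw [Set.disjoint_left]
      intro ω hω hω'
      have : (1 : ℤ) = -1 := (hω : X m ω = 1).symm.trans hω'
      omega
    set U := {ω : Ω' | X m ω = 1} ∪ {ω : Ω' | X m ω = -1} with hUdef
    have hUmeas : MeasurableSet U := hU1.union hU2
    have hU : μ' U = 1 := by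
      rw [hUdef, measure_union hd12 hU2, h1 m, h2 m]
      exact ENNReal.add_halves 1
    have hsplit : μ' E = μ' (E ∩ U) := by
      have h3 := measure_inter_add_diff (μ := μ') E hUmeas
      have h4 : μ' (E \ U) = 0 := by
        refine measure_mono_null (diff_subset_compl E U) ?_
        exact (prob_compl_eq_zero_iff hUmeas).2 hU
      rw [← h3, h4, add_zero]
    have hEU : E ∩ U = (E ∩ {ω : Ω' | X m ω = 1}) ∪ (E ∩ {ω : Ω' | X m ω = -1}) := by
      rw [hUdef, inter_union_distrib_left]
    have hE1 : E ∩ {ω : Ω' | X m ω = 1}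
        = {ω : Ω' | (∑ i ∈ Finset.range m, X i ω) = z - 1} ∩ {ω : Ω' | X m ω = 1} := by
      ext ω
      simp only [hE, mem_inter_iff, mem_setOf_eq, Finset.sum_range_succ]
      constructor
      · rintro ⟨hs, hx⟩; exact ⟨by omega, hx⟩
      · rintro ⟨hs, hx⟩; rw [hx] at *; exact ⟨by omega, rfl⟩
    have hE2 : E ∩ {ω : Ω' | X m ω = -1}
        = {ω : Ω' | (∑ i ∈ Finset.range m, X i ω) = z + 1} ∩ {ω : Ω' | X m ω = -1} := by
      ext ω
      simp only [hE, mem_inter_iff, mem_setOf_eq, Finset.sum_range_succ]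
      constructor
      · rintro ⟨hs, hx⟩; exact ⟨by omega, hx⟩
      · rintro ⟨hs, hx⟩; rw [hx] at *; exact ⟨by omega, rfl⟩
    have hind : IndepFun (fun ω => ∑ i ∈ Finset.range m, X i ω) (X m) μ' := by
      have := hindep.indepFun_sum_range_succ hmeas m
      have hfun : (∑ j ∈ Finset.range m, X j) = fun ω => ∑ i ∈ Finset.range m, X i ω := by
        funext ω; simp [Finset.sum_apply]
      rwa [hfun] at this
    have hprod1 : μ' ({ω : Ω' | (∑ i ∈ Finset.range m, X i ω) = z - 1} ∩ {ω : Ω' | X m ω = 1})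
        = μ' {ω : Ω' | (∑ i ∈ Finset.range m, X i ω) = z - 1} * μ' {ω : Ω' | X m ω = 1} :=
      hind.measure_inter_preimage_eq_mul (s := {z-1}) (t := {1}) (measurableSet_singleton (z-1)) (measurableSet_singleton 1)
    have hprod2 : μ' ({ω : Ω' | (∑ i ∈ Finset.range m, X i ω) = z + 1} ∩ {ω : Ω' | X m ω = -1})
        = μ' {ω : Ω' | (∑ i ∈ Finset.range m, X i ω) = z + 1} * μ' {ω : Ω' | X m ω = -1} :=
      hind.measure_inter_preimage_eq_mul (s := {z+1}) (t := {-1}) (measurableSet_singleton (z+1))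
        (measurableSet_singleton (-1))
    have hdisj2 : Disjoint (E ∩ {ω : Ω' | X m ω = 1}) (E ∩ {ω : Ω' | X m ω = -1}) :=
      hd12.mono inter_subset_right inter_subset_right
    calc μ' E = μ' (E ∩ U) := hsplit
      _ = μ' (E ∩ {ω : Ω' | X m ω = 1}) + μ' (E ∩ {ω : Ω' | X m ω = -1}) := by
          rw [hEU, measure_union hdisj2 (hEmeas.inter hU2)]
      _ = Qq m (z-1) * (1/2) + Qq m (z+1) * (1/2) := by
          rw [hE1, hE2, hprod1, hprod2, h1 m, h2 m, ih (z-1), ih (z+1)]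
      _ = Qq (m+1) z := by rw [Qq_succ]; ring

end Walk


end SpiderAux

/-- Transition probability of the spider walk between distinct legs `ℓ ≠ ℓ*`:
`P(S_{2k+2n} = v(2i,ℓ*) | S_{2k} = v(2j,ℓ)) = 2 p_{ℓ*} P(S(2n) = 2(i+j))`, where `S` is
a simple symmetric random walk on `ℤ`. -/
theorem spider_transition_different_legs
    {Ω Ω' : Type*} [MeasurableSpace Ω] [MeasurableSpace Ω']
    (μ : Measure Ω) [IsProbabilityMeasure μ]
    (μ' : Measure Ω') [IsProbabilityMeasure μ']
    (N : ℕ) (hN : 1 ≤ N) (p : Fin N → ℝ) (hp0 : ∀ j, 0 ≤ p j) (hp : ∑ j, p j = 1)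
    (Y : ℕ → Ω → SpiderVertex N)
    (hY0 : ∀ ω, Y 0 ω = none)
    (hMarkov : ∀ (n : ℕ) (h : ℕ → SpiderVertex N) (v : SpiderVertex N),
      μ {ω | ∀ i ≤ n, Y i ω = h i} ≠ 0 →
      (μ[|{ω | ∀ i ≤ n, Y i ω = h i}]) {ω | Y (n+1) ω = v} = spiderKernel p (h n) v)
    (X : ℕ → Ω' → ℤ) (hmeas : ∀ i, Measurable (X i))
    (hindep : iIndepFun X μ')
    (h1 : ∀ i, μ' {ω | X i ω = 1} = 1/2) (h2 : ∀ i, μ' {ω | X i ω = -1} = 1/2)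
    (S : ℕ → Ω' → ℤ) (hS : ∀ n ω, S n ω = ∑ i ∈ Finset.range n, X i ω)
    (n k i j : ℕ) (hn : 1 ≤ n) (hi : 1 ≤ i) (hj : 1 ≤ j) (hij : i + j ≤ n)
    (ℓ ℓstar : Fin N) (hℓ : ℓ ≠ ℓstar)
    (hB : μ {ω | Y (2*k) ω = some (ℓ, 2*j - 1)} ≠ 0) :
    ((μ[|{ω | Y (2*k) ω = some (ℓ, 2*j - 1)}])
        {ω | Y (2*k+2*n) ω = some (ℓstar, 2*i - 1)}).toReal
      = 2 * p ℓstar * (μ' {ω | S (2*n) ω = 2*(i+j)}).toReal := by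
  classical
  have hcond : (μ[|{ω | Y (2*k) ω = some (ℓ, 2*j - 1)}])
      {ω | Y (2*k+2*n) ω = some (ℓstar, 2*i - 1)}
      = SpiderAux.KpowE p (2*n) (some (ℓ, 2*j - 1)) (some (ℓstar, 2*i - 1)) :=
    SpiderAux.cond_eq μ Y hp0 hp hY0 hMarkov (2*k) (2*n)
      (some (ℓ, 2*j - 1)) (some (ℓstar, 2*i - 1)) hB
  have hK := (SpiderAux.Gmain hp0 hp ℓ (2*j-1) (2*n)).2.1 ℓstar (Ne.symm hℓ) (2*i-1)
  have harg : (-(((2*i-1 : ℕ):ℤ)+1) - (((2*j-1 : ℕ):ℤ)+1)) = -(2*((i:ℤ)+(j:ℤ))) := by omega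
  rw [harg, SpiderAux.Qq_neg] at hK
  have hset : {ω | S (2*n) ω = 2*(i+j)}
      = {ω | (∑ t ∈ Finset.range (2*n), X t ω) = 2*((i:ℤ)+(j:ℤ))} := by
    ext ω
    rw [Set.mem_setOf_eq, Set.mem_setOf_eq, hS]
  have hwalk := SpiderAux.walk μ' X hmeas hindep h1 h2 (2*n) (2*((i:ℤ)+(j:ℤ)))
  rw [hcond, hK, hset, hwalk, ENNReal.toReal_mul, ENNReal.toReal_mul,
    ENNReal.toReal_ofNat, ENNReal.toReal_ofReal (hp0 ℓstar)]
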